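/- Let J be an almost complex structure on h_{2n+2} such that J maps Span{X¹,…,X^{n+1}} into Span{X^{n+2},…,X^{2n+2}} and vice versa. Then the Nijenhuis tensor satisfies N(Xⁱ, X^{n+1}) = X^{n+1+i} for 1 ≤ i ≤ n. -/

import Mathlib

/-- For an almost complex structure `J` on `h_{2n+2}` interchanging
`V₁ = Span{X 0,…,X n}` and `V₂ = Span{X (n+1),…,X (2n+1)}`, the Nijenhuis tensor
satisfies `N(X (i), X n) = X (n+1+i)` for `i < n`. -/
theorem nijenhuis_on_basis (n : ℕ) (L : Type) [LieRing L] [LieAlgebra ℝ L]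
    (X : Module.Basis (Fin (2 * n + 2)) ℝ L)
    (hbr : ∀ i j : Fin (2 * n + 2), ⁅X i, X j⁆ =
      if hij : i.val < n ∧ j.val = n then X ⟨n + 1 + i.val, by omega⟩
      else if hji : j.val < n ∧ i.val = n then -X ⟨n + 1 + j.val, by omega⟩
      else 0)
    (J : L →ₗ[ℝ] L) (hJ : ∀ x, J (J x) = -x)
    (hJ12 : ∀ i : Fin (2 * n + 2), i.val ≤ n →
      J (X i) ∈ Submodule.span ℝ {z : L | ∃ j : Fin (2 * n + 2), n + 1 ≤ j.val ∧ z = X j})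
    (hJ21 : ∀ i : Fin (2 * n + 2), n + 1 ≤ i.val →
      J (X i) ∈ Submodule.span ℝ {z : L | ∃ j : Fin (2 * n + 2), j.val ≤ n ∧ z = X j}) :
    ∀ i : Fin (2 * n + 2), (hi : i.val < n) →
      ⁅X i, X ⟨n, by omega⟩⁆ + J ⁅J (X i), X ⟨n, by omega⟩⁆
        + J ⁅X i, J (X ⟨n, by omega⟩)⁆ - ⁅J (X i), J (X ⟨n, by omega⟩)⁆
      = X ⟨n + 1 + i.val, by omega⟩ := by
  intro i hi
  set S₂ : Set L := {z : L | ∃ j : Fin (2 * n + 2), n + 1 ≤ j.val ∧ z = X j} with hS₂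
  -- base bracket vanishing facts
  have hbase1 : ∀ j : Fin (2 * n + 2), n + 1 ≤ j.val →
      ⁅X j, X (⟨n, by omega⟩ : Fin (2 * n + 2))⁆ = 0 := by
    intro j hj
    rw [hbr]
    split_ifs with h1 h2
    · omega
    · omega
    · rfl
  have hbase2 : ∀ j : Fin (2 * n + 2), n + 1 ≤ j.val → ⁅X i, X j⁆ = 0 := by
    intro j hj
    rw [hbr]
    split_ifs with h1 h2
    · omega
    · omega
    · rfl
  have hbase3 : ∀ j k : Fin (2 * n + 2), n + 1 ≤ j.val → n + 1 ≤ k.val →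
      ⁅X j, X k⁆ = 0 := by
    intro j k hj hk
    rw [hbr]
    split_ifs with h1 h2
    · omega
    · omega
    · rfl
  -- vanishing on the span
  have hA : ∀ v ∈ Submodule.span ℝ S₂, ⁅v, X (⟨n, by omega⟩ : Fin (2 * n + 2))⁆ = 0 := by
    intro v hv
    induction hv using Submodule.span_induction with
    | mem z hz => obtain ⟨j, hj, rfl⟩ := hz; exact hbase1 j hj
    | zero => simp
    | add a b _ _ ha hb => rw [add_lie, ha, hb, add_zero]
    | smul c a _ ha => rw [smul_lie, ha, smul_zero]
  have hB : ∀ v ∈ Submodule.span ℝ S₂, ⁅X i, v⁆ = 0 := by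
    intro v hv
    induction hv using Submodule.span_induction with
    | mem z hz => obtain ⟨j, hj, rfl⟩ := hz; exact hbase2 j hj
    | zero => simp
    | add a b _ _ ha hb => rw [lie_add, ha, hb, add_zero]
    | smul c a _ ha => rw [lie_smul, ha, smul_zero]
  have hC : ∀ v ∈ Submodule.span ℝ S₂, ∀ w ∈ Submodule.span ℝ S₂, ⁅v, w⁆ = 0 := by
    intro v hv
    induction hv using Submodule.span_induction with
    | mem z hz =>
      obtain ⟨j, hj, rfl⟩ := hz
      intro w hw
      induction hw using Submodule.span_induction with
      | mem z' hz' => obtain ⟨k, hk, rfl⟩ := hz'; exact hbase3 j k hj hk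
      | zero => simp
      | add a b _ _ ha hb => rw [lie_add, ha, hb, add_zero]
      | smul c a _ ha => rw [lie_smul, ha, smul_zero]
    | zero => intro w hw; simp
    | add a b _ _ ha hb =>
      intro w hw; rw [add_lie, ha w hw, hb w hw, add_zero]
    | smul c a _ ha =>
      intro w hw; rw [smul_lie, ha w hw, smul_zero]
  have hJi := hJ12 i (by omega)
  have hJn := hJ12 ⟨n, by omega⟩ (le_refl n)
  rw [hA _ hJi, hB _ hJn, hC _ hJi _ hJn]
  rw [hbr]
  split_ifs with h1 h2
  · simp
  · exact absurd ⟨hi, rfl⟩ h1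
  · exact absurd ⟨hi, rfl⟩ h1
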